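/- Let N ∈ ℕ, λ_* ∈ ℂ, and let ι : ℂ → ℂ^{N×N} be analytic at λ_*. Let p ∈ ℕ and let u(λ) = Σ_{j=0}^p u_j (λ−λ_*)^j be a polynomial with values in ℂ^N such that u(λ_*) ≠ 0 and the analytic function λ ↦ ι(λ)·u(λ) vanishes at λ_* to order at least s (i.e., its derivatives of order 0,…,s−1 at λ_* all vanish). Then the analytic function λ ↦ det ι(λ) vanishes at λ_* to order at least s. -/

import Mathlib

open Filter Function Topology FormalMultilinearSeries

lemma my_iteratedDeriv_eq {E : Type*} [NormedAddCommGroup E] [NormedSpace ℂ E]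
    [CompleteSpace E] {f : ℂ → E} {q : FormalMultilinearSeries ℂ ℂ E} {x : ℂ}
    (hq : HasFPowerSeriesAt f q x) (n : ℕ) :
    iteratedDeriv n f x = n.factorial • q.coeff n := by
  obtain ⟨r, hr⟩ := hq
  rw [iteratedDeriv_eq_iteratedFDeriv, ← hr.factorial_smul (1 : ℂ) n]
  rfl

lemma my_factor {E : Type*} [NormedAddCommGroup E] [NormedSpace ℂ E]
    {f : ℂ → E} {q : FormalMultilinearSeries ℂ ℂ E} {μ : ℂ} (s : ℕ)
    (hq : HasFPowerSeriesAt f q μ) (h : ∀ k < s, q.coeff k = 0) :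
    ∃ g : ℂ → E, AnalyticAt ℂ g μ ∧ ∀ z, f z = (z - μ) ^ s • g z := by
  induction s generalizing f q with
  | zero => exact ⟨f, ⟨q, hq⟩, fun z => by simp⟩
  | succ s ih =>
    have h0 : f μ = 0 := by
      have := hq.coeff_zero 1
      rw [← this]
      simpa using h 0 (Nat.succ_pos s)
    have hd := hq.has_fpower_series_dslope_fslope
    obtain ⟨g, hg, hfac⟩ := ih hd (fun k hk => by
      rw [coeff_fslope]; exact h (k + 1) (Nat.succ_lt_succ hk))
    refine ⟨g, hg, fun z => ?_⟩
    have := sub_smul_dslope f μ z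
    rw [h0, sub_zero] at this
    rw [← this, hfac z, pow_succ', mul_smul, smul_comm]

lemma my_det_analytic {N : ℕ} {M : ℂ → Matrix (Fin N) (Fin N) ℂ} {μ : ℂ}
    (hM : ∀ a b, AnalyticAt ℂ (fun w => M w a b) μ) :
    AnalyticAt ℂ (fun w => (M w).det) μ := by
  have : (fun w => (M w).det)
      = fun w => ∑ σ : Equiv.Perm (Fin N),
          (Equiv.Perm.sign σ : ℂ) * ∏ i, M w (σ i) i := by
    funext w
    simp [Matrix.det_apply, Units.smul_def, zsmul_eq_mul]
  rw [this]
  exact Finset.analyticAt_fun_sum _ fun σ _ =>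
    analyticAt_const.mul (Finset.analyticAt_fun_prod _ fun i _ => hM (σ i) i)

lemma my_converse {F G : ℂ → ℂ} {μ : ℂ} {s : ℕ}
    (hF : AnalyticAt ℂ F μ) (hG : AnalyticAt ℂ G μ)
    (heq : ∀ᶠ z in nhds μ, F z = (z - μ) ^ s * G z) :
    ∀ n < s, iteratedDeriv n F μ = 0 := by
  obtain ⟨q, hq⟩ := hF
  suffices h : ∀ n < s, q.coeff n = 0 by
    intro n hn
    rw [my_iteratedDeriv_eq hq n, h n hn, smul_zero]
  by_cases hq0 : q = 0
  · intro n hn; simp [hq0, FormalMultilinearSeries.coeff]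
  have hord : s ≤ q.order := by
    by_contra hlt
    push_neg at hlt
    set m := q.order with hm
    have hiter := hq.has_fpower_series_iterate_dslope_fslope m
    have hne := hq.iterate_dslope_fslope_ne_zero hq0
    have hcont : ContinuousAt ((Function.swap dslope μ)^[m] F) μ :=
      hiter.analyticAt.continuousAt
    have heq2 := hq.eq_pow_order_mul_iterate_dslope
    have hpunct : ∀ᶠ z in 𝓝[≠] μ,
        (Function.swap dslope μ)^[m] F z = (z - μ) ^ (s - m) * G z := by
      filter_upwards [eventually_nhdsWithin_of_eventually_nhds heq,
        eventually_nhdsWithin_of_eventually_nhds (Filter.Eventually.of_forall heq2),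
        self_mem_nhdsWithin] with z h1 h2 hzne
      have hz : (z - μ) ≠ 0 := sub_ne_zero.mpr hzne
      have hpow : (z - μ) ^ m ≠ 0 := pow_ne_zero _ hz
      have : (z - μ) ^ m * (Function.swap dslope μ)^[m] F z
          = (z - μ) ^ m * ((z - μ) ^ (s - m) * G z) := by
        rw [← smul_eq_mul, ← h2, h1, ← mul_assoc, ← pow_add]
        congr 2
        omega
      exact mul_left_cancel₀ hpow this
    have h1 : Tendsto ((Function.swap dslope μ)^[m] F) (𝓝[≠] μ)
        (nhds (((Function.swap dslope μ)^[m] F) μ)) :=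
      hcont.continuousWithinAt.tendsto
    have h2 : Tendsto (fun z => (z - μ) ^ (s - m) * G z) (𝓝[≠] μ) (nhds 0) := by
      have hc : ContinuousAt (fun z => (z - μ) ^ (s - m) * G z) μ :=
        (((continuous_id.sub continuous_const).pow _).continuousAt).mul
          hG.continuousAt
      have hval : (μ - μ) ^ (s - m) * G μ = 0 := by
        rw [sub_self, zero_pow (by omega), zero_mul]
      have h3 : Tendsto (fun z => (z - μ) ^ (s - m) * G z) (𝓝[≠] μ)
          (nhds ((μ - μ) ^ (s - m) * G μ)) :=
        (hc.continuousWithinAt (s := {μ}ᶜ)).tendsto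
      rwa [hval] at h3
    exact hne (tendsto_nhds_unique (h1.congr' hpunct) h2)
  intro n hn
  rw [FormalMultilinearSeries.coeff_eq_zero]
  exact q.apply_eq_zero_of_lt_order (lt_of_lt_of_le hn hord)

/-- A root function controls the order of vanishing of the Evans function: if `ι` is
analytic at `μ_*`, `u(μ) = Σ_{j=0}^p u_j (μ−μ_*)^j` is a polynomial with `u(μ_*) ≠ 0`,
and `μ ↦ ι(μ)·u(μ)` vanishes at `μ_*` to order at least `s`, then `μ ↦ det ι(μ)`
vanishes at `μ_*` to order at least `s`. -/
theorem root_function_det_vanishing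
    (N : ℕ) (μstar : ℂ) (ι : ℂ → Matrix (Fin N) (Fin N) ℂ)
    (hι : ∀ a b : Fin N, AnalyticAt ℂ (fun w => ι w a b) μstar)
    (p s : ℕ) (uc : ℕ → Fin N → ℂ)
    (hne : (∑ j ∈ Finset.range (p + 1), (μstar - μstar) ^ j • uc j) ≠ 0)
    (hroot : ∀ n < s,
      iteratedDeriv n
        (fun w : ℂ => (ι w).mulVec (∑ j ∈ Finset.range (p + 1), (w - μstar) ^ j • uc j))
        μstar = 0) :
    ∀ n < s, iteratedDeriv n (fun w : ℂ => (ι w).det) μstar = 0 := by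
  classical
  -- the polynomial `u` and the function `v = ι · u`
  set u : ℂ → Fin N → ℂ :=
    fun w => ∑ j ∈ Finset.range (p + 1), (w - μstar) ^ j • uc j with hu_def
  set v : ℂ → Fin N → ℂ := fun w => (ι w).mulVec (u w) with hv_def
  -- `u` is analytic componentwise
  have hu_a : ∀ a : Fin N, AnalyticAt ℂ (fun w => u w a) μstar := by
    intro a
    have huw : (fun w => u w a)
        = fun w => ∑ j ∈ Finset.range (p + 1), (w - μstar) ^ j * uc j a := by
      funext w
      simp [hu_def]
    rw [huw]
    exact Finset.analyticAt_fun_sum _ fun j _ =>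
      ((analyticAt_id.sub analyticAt_const).pow j).mul analyticAt_const
  -- `v` is analytic componentwise and as a `Pi`-valued map
  have hv_a : ∀ a : Fin N, AnalyticAt ℂ (fun w => v w a) μstar := by
    intro a
    have hvw : (fun w => v w a) = fun w => ∑ b, ι w a b * u w b := by
      funext w
      simp [hv_def, Matrix.mulVec, dotProduct]
    rw [hvw]
    exact Finset.analyticAt_fun_sum _ fun b _ => (hι a b).mul (hu_a b)
  have hv : AnalyticAt ℂ v μstar := AnalyticAt.pi hv_a
  obtain ⟨P, hP⟩ := hv
  -- the Taylor coefficients of `v` below `s` vanish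
  have hPcoeff : ∀ n < s, P.coeff n = 0 := by
    intro n hn
    have h1 := my_iteratedDeriv_eq hP n
    rw [hroot n hn] at h1
    have h2 : ((n.factorial : ℂ)) • P.coeff n = 0 := by
      rw [Nat.cast_smul_eq_nsmul]
      exact h1.symm
    rcases smul_eq_zero.mp h2 with h | h
    · exact absurd h (by exact_mod_cast n.factorial_ne_zero)
    · exact h
  -- factor `v z = (z - μstar)^s • g z`
  obtain ⟨g, hg, hfac⟩ := my_factor s hP hPcoeff
  -- `u μstar = uc 0 ≠ 0`; pick a coordinate `k`
  have hval : u μstar = uc 0 := by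
    show (∑ j ∈ Finset.range (p + 1), (μstar - μstar) ^ j • uc j) = uc 0
    rw [sub_self]
    rw [Finset.sum_eq_single 0]
    · rw [pow_zero, one_smul]
    · intro j _ hj
      rw [zero_pow hj, zero_smul]
    · intro h
      exact absurd (Finset.mem_range.mpr (Nat.succ_pos p)) h
  have huc0 : uc 0 ≠ 0 := hval ▸ hne
  obtain ⟨k, hk'⟩ := Function.ne_iff.mp huc0
  have hk : uc 0 k ≠ 0 := by simpa using hk'
  -- cofactor functions
  set c : Fin N → ℂ → ℂ :=
    fun a w => Matrix.cramer (ι w) (fun j => if a = j then 1 else 0) k with hc_def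
  have hc : ∀ a, AnalyticAt ℂ (c a) μstar := by
    intro a
    have hca : c a = fun w =>
        ((ι w).updateCol k (fun j => if a = j then 1 else 0)).det := by
      funext w
      exact Matrix.cramer_apply _ _ _
    rw [hca]
    refine my_det_analytic fun i j => ?_
    have : (fun w => (ι w).updateCol k (fun j' => if a = j' then 1 else 0) i j)
        = fun w => if j = k then (if a = i then (1 : ℂ) else 0) else ι w i j := by
      funext w
      rw [Matrix.updateCol_apply]
    rw [this]
    by_cases hjk : j = k
    · simp only [hjk, if_pos rfl]
      exact analyticAt_const
    · simp only [if_neg hjk]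
      exact hι i j
  -- the key determinant identity
  have hkey : ∀ w, (ι w).det * u w k = ∑ a, v w a * c a w := by
    intro w
    have hM : ι w * Matrix.updateCol 1 k (u w)
        = Matrix.updateCol (ι w) k (v w) := by
      ext i j
      rcases eq_or_ne j k with rfl | hjk
      · simp [Matrix.mul_apply, Matrix.updateCol_apply, hv_def, Matrix.mulVec,
          dotProduct]
      · simp [Matrix.mul_apply, Matrix.updateCol_apply, hjk, Matrix.one_apply,
          mul_ite, Finset.sum_ite_eq']
    have h1 : (ι w).det * u w k = (Matrix.updateCol (ι w) k (v w)).det := by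
      rw [← hM, Matrix.det_mul]
      congr 1
      calc u w k = Matrix.cramer (1 : Matrix (Fin N) (Fin N) ℂ) (u w) k := by
            rw [Matrix.cramer_one]; rfl
        _ = (Matrix.updateCol (1 : Matrix (Fin N) (Fin N) ℂ) k (u w)).det :=
            Matrix.cramer_apply _ _ _
    have h2 : (Matrix.updateCol (ι w) k (v w)).det = ∑ a, v w a * c a w := by
      rw [← Matrix.cramer_apply]
      conv_lhs => rw [pi_eq_sum_univ (v w)]
      rw [map_sum, Finset.sum_apply]
      refine Finset.sum_congr rfl fun a _ => ?_
      rw [map_smul]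
      simp [hc_def, smul_eq_mul]
    rw [h1, h2]
  -- rewrite the identity using the factorization of `v`
  set h : ℂ → ℂ := fun w => ∑ a, g w a * c a w with hh_def
  have hh : AnalyticAt ℂ h μstar :=
    Finset.analyticAt_fun_sum _ fun a _ => (analyticAt_pi_iff.mp hg a).mul (hc a)
  have hkey2 : ∀ w, (ι w).det * u w k = (w - μstar) ^ s * h w := by
    intro w
    rw [hkey w, hh_def, Finset.mul_sum]
    refine Finset.sum_congr rfl fun a _ => ?_
    rw [hfac w]
    simp [mul_assoc]
  -- eventually `u w k ≠ 0`
  have hUne : ∀ᶠ w in nhds μstar, u w k ≠ 0 :=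
    (hu_a k).continuousAt.eventually_ne (by rw [hval]; exact hk)
  -- eventual factorization of the determinant
  have heqF : ∀ᶠ w in nhds μstar,
      (ι w).det = (w - μstar) ^ s * (h w * (u w k)⁻¹) := by
    filter_upwards [hUne] with w hw
    have := hkey2 w
    field_simp
    linear_combination this
  have hG : AnalyticAt ℂ (fun w => h w * (u w k)⁻¹) μstar :=
    hh.mul ((hu_a k).inv (by rw [hval]; exact hk))
  exact my_converse (my_det_analytic hι) hG heqF
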